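/- Let T be a homeomorphism of a compact metric space X. If for every ε > 0 there exists a finite ε-network A ⊆ X such that T^n(A) is an ε-network for every n ∈ ℤ, then (X,T) is nonwandering, i.e., every point of X is a nonwandering point. -/
import Mathlib


open Metric Filter Set Topology
open scoped Classical

variable {X : Type*}

/-- A set of naturals is syndetic: bounded gaps. -/
def Syndetic (S : Set ℕ) : Prop := ∃ n : ℕ, ∀ m : ℕ, ∃ k ∈ S, m ≤ k ∧ k ≤ m + n

/-- Forward orbit of a point. -/
def fwdOrbit (T : X → X) (y : X) : Set X := Set.range fun k : ℕ => T^[k] y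

/-- A point is minimal (almost periodic): its forward orbit closure is a minimal set. -/
def IsMinimalPt [TopologicalSpace X] (T : X → X) (y : X) : Prop :=
  ∀ z ∈ closure (fwdOrbit T y), closure (fwdOrbit T z) = closure (fwdOrbit T y)

/-- ℤ-iteration of a homeomorphism. -/
noncomputable def zIter [TopologicalSpace X] (T : X ≃ₜ X) (n : ℤ) : X → X :=
  if 0 ≤ n then (⇑T)^[n.toNat] else (⇑T.symm)^[(-n).toNat]

/-- `A` is an `ε`-network: every point of the space is within `ε` of `A`. -/
def IsNet [PseudoMetricSpace X] (ε : ℝ) (A : Set X) : Prop :=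
  ∀ x : X, ∃ a ∈ A, dist x a ≤ ε

/-- A point is nonwandering (w.r.t. forward iterates). -/
def NonWandering [TopologicalSpace X] (T : X → X) (x : X) : Prop :=
  ∀ U : Set X, IsOpen U → x ∈ U → ∃ k : ℕ, 1 ≤ k ∧ ((fun p => T^[k] p) '' U ∩ U).Nonempty

/-- One-sided `d`-pseudotrajectory. -/
def IsPseudoTraj [PseudoMetricSpace X] (T : X → X) (d : ℝ) (x : ℕ → X) : Prop :=
  ∀ k : ℕ, dist (x (k + 1)) (T (x k)) ≤ d

/-- Two-sided `d`-pseudotrajectory. -/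
def IsPseudoTrajZ [PseudoMetricSpace X] (T : X → X) (d : ℝ) (x : ℤ → X) : Prop :=
  ∀ k : ℤ, dist (x (k + 1)) (T (x k)) ≤ d

/-- A chain recurrent point. -/
def ChainRec [PseudoMetricSpace X] (T : X → X) (x : X) : Prop :=
  ∀ d > (0 : ℝ), ∃ n : ℕ, 1 ≤ n ∧ ∃ c : ℕ → X, c 0 = x ∧ c n = x ∧
    ∀ k < n, dist (c (k + 1)) (T (c k)) ≤ d

/-- ω-limit set of a point under a map. -/
def omegaSet [TopologicalSpace X] (T : X → X) (y : X) : Set X :=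
  {p | ∃ φ : ℕ → ℕ, StrictMono φ ∧ Tendsto (fun n => T^[φ n] y) atTop (nhds p)}

/-- The set of recurrent points (`x ∈ ω(x)`). -/
def RecurrentPts [TopologicalSpace X] (T : X → X) : Set X := {x | x ∈ omegaSet T x}

/-- The multishadowing property (for homeomorphisms, two-sided). -/
def Multishadowing [PseudoMetricSpace X] (T : X ≃ₜ X) : Prop :=
  ∀ ε > (0 : ℝ), ∃ d > (0 : ℝ), ∀ x : ℤ → X, IsPseudoTrajZ (⇑T) d x →
    ∃ Y : Finset X, ∀ k : ℤ, ∃ y ∈ Y, dist (x k) (zIter T k y) < ε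

/-- Topological support of a measure: points all of whose open neighborhoods
have positive measure. -/
def msupp [TopologicalSpace X] [MeasurableSpace X] (μ : MeasureTheory.Measure X) : Set X :=
  {x | ∀ U : Set X, IsOpen U → x ∈ U → 0 < μ U}

/-- Counting function for density computations. -/
noncomputable def cnt (K : Set ℕ) (N : ℕ) : ℝ :=
  ((Finset.range (N + 1)).filter (· ∈ K)).card


theorem stmt1 [MetricSpace X] [CompactSpace X] (T : X ≃ₜ X)
    (h : ∀ ε > (0 : ℝ), ∃ A : Finset X, ∀ n : ℤ, IsNet ε (zIter T n '' (A : Set X))) :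
    ∀ x : X, NonWandering (⇑T) x := by
  intro x U hU hxU
  obtain ⟨r, hr, hball⟩ := Metric.isOpen_iff.mp hU x hxU
  obtain ⟨A, hA⟩ := h (r / 2) (by linarith)
  have key : ∀ n : ℕ, ∃ a : {a // a ∈ A}, dist x (T^[n] a.1) ≤ r / 2 := by
    intro n
    obtain ⟨p, hp, hd⟩ := hA (n : ℤ) x
    obtain ⟨a, ha, rfl⟩ := hp
    have : zIter T (n : ℤ) a = T^[n] a := by
      simp [zIter, Int.toNat_natCast]
    exact ⟨⟨a, ha⟩, by rwa [this] at hd⟩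
  choose f hf using fun n : Fin (A.card + 1) => key n
  have hcard : Fintype.card {a // a ∈ A} < Fintype.card (Fin (A.card + 1)) := by
    simp [Fintype.card_coe]
  obtain ⟨i, j, hij, hfij⟩ := Fintype.exists_ne_map_eq_of_card_lt f hcard
  have main : ∀ p q : Fin (A.card + 1), p < q → f p = f q →
      ∃ k : ℕ, 1 ≤ k ∧ (((fun y => (⇑T)^[k] y) '' U) ∩ U).Nonempty := by
    intro p q hpq hfe
    refine ⟨(q : ℕ) - (p : ℕ), by omega, T^[(q : ℕ)] (f p).1,
      ⟨T^[(p : ℕ)] (f p).1, ?_, ?_⟩, ?_⟩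
    · apply hball
      simp only [Metric.mem_ball]
      have := hf p
      rw [dist_comm] at this
      linarith
    · show T^[(q : ℕ) - (p : ℕ)] (T^[(p : ℕ)] (f p).1) = _
      rw [← Function.iterate_add_apply]
      congr 1
      omega
    · apply hball
      simp only [Metric.mem_ball]
      have := hf q
      rw [hfe]
      rw [dist_comm] at this
      linarith
  rcases hij.lt_or_gt with h1 | h1
  · exact main i j h1 hfij
  · exact main j i h1 hfij.symm
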